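/- Let C be a [n,k] Reed-Solomon code over GF(q) with parity check matrix H (so C^⊥ is GRS of dimension n−k), and suppose the covering radius of C is n−k. Then a received word u ∈ GF(q)^n is a deep hole of C (i.e., at distance n−k from C) if and only if the augmented matrix [H | Hu] generates an [n+1, n−k] MDS code. -/

import Mathlib

open Finset

lemma aux_key {F : Type*} [Field F] {n r : ℕ}
    (H : Matrix (Fin r) (Fin n) F) (u : Fin n → F)
    (s : Fin r → Fin (n + 1)) (c : Fin r → F) (i0 : Fin r) :
    ((Matrix.of fun i j => if h : (j : ℕ) < n then H i ⟨j, h⟩ else H.mulVec u i :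
        Matrix (Fin r) (Fin (n + 1)) F).submatrix id s).mulVec c i0
      = H.mulVec (fun i => ∑ j : Fin r, if (s j : ℕ) = (i : ℕ) then c j else 0) i0
        + ∑ j : Fin r, (if (s j : ℕ) < n then 0 else H.mulVec u i0 * c j) := by
  classical
  have hmid : H.mulVec (fun i => ∑ j : Fin r, if (s j : ℕ) = (i : ℕ) then c j else 0) i0
      = ∑ j : Fin r, (if h : (s j : ℕ) < n then H i0 ⟨s j, h⟩ * c j else 0) := by
    simp only [Matrix.mulVec, dotProduct, Finset.mul_sum]
    rw [Finset.sum_comm]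
    refine Finset.sum_congr rfl fun j _ => ?_
    by_cases h : (s j : ℕ) < n
    · rw [dif_pos h, Finset.sum_eq_single (⟨s j, h⟩ : Fin n)]
      · simp
      · intro i _ hi
        have : (s j : ℕ) ≠ (i : ℕ) := fun hc => hi (Fin.ext hc.symm)
        simp [this]
      · simp
    · rw [dif_neg h]
      refine Finset.sum_eq_zero fun i _ => ?_
      have : (s j : ℕ) ≠ (i : ℕ) := by omega
      simp [this]
  rw [hmid, ← Finset.sum_add_distrib]
  simp only [Matrix.mulVec, dotProduct, Matrix.submatrix_apply, id_eq, Matrix.of_apply]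
  refine Finset.sum_congr rfl fun j _ => ?_
  by_cases h : (s j : ℕ) < n
  · rw [dif_pos h, dif_pos h, if_pos h]; ring
  · rw [dif_neg h, dif_neg h, if_neg h]; ring

lemma aux_ker {F : Type*} [Field F] [DecidableEq F] {n k r : ℕ} (hn : n = k + r)
    {x : Fin n → F} (hx : Function.Injective x)
    {H : Matrix (Fin r) (Fin n) F}
    (hH : ∀ v : Fin n → F,
      (∃ f : Polynomial F, f.degree < (k : ℕ) ∧ v = fun i => f.eval (x i)) ↔ H.mulVec v = 0)
    (e : Fin n → F) (he : H.mulVec e = 0)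
    (hw : #{i : Fin n | e i ≠ 0} ≤ r) : e = 0 := by
  obtain ⟨f, hdeg, hef⟩ := (hH e).mpr he
  have hZcard : k ≤ #{i : Fin n | e i = 0} := by
    have := Finset.card_filter_add_card_filter_not (s := (univ : Finset (Fin n)))
      (p := fun i => e i = 0)
    simp only [Finset.card_univ, Fintype.card_fin] at this
    have h2 : #{i : Fin n | ¬ e i = 0} ≤ r := by
      convert hw using 2
    omega
  have hf : f = 0 := by
    by_contra hf0
    have hnd : f.natDegree < k := by
      rwa [Polynomial.natDegree_lt_iff_degree_lt hf0]
    apply hf0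
    refine Polynomial.eq_zero_of_natDegree_lt_card_of_eval_eq_zero' f
      ((({i : Fin n | e i = 0} : Finset (Fin n))).image x) ?_ ?_
    · intro y hy
      obtain ⟨i, hi, rfl⟩ := Finset.mem_image.mp hy
      have : e i = 0 := (Finset.mem_filter.mp hi).2
      rw [hef] at this
      exact this
    · rw [Finset.card_image_of_injective _ hx]
      omega
  rw [hef, hf]
  funext i; simp

lemma aux_single {F : Type*} [Field F] {n r : ℕ}
    {s : Fin r → Fin (n + 1)} (hs : Function.Injective s) (c : Fin r → F)
    {j : Fin r} {i : Fin n} (hji : (s j : ℕ) = (i : ℕ)) :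
    (∑ j' : Fin r, if (s j' : ℕ) = (i : ℕ) then c j' else 0) = c j := by
  rw [Finset.sum_eq_single j]
  · rw [if_pos hji]
  · intro j' _ hj'
    have : (s j' : ℕ) ≠ (i : ℕ) := by
      intro hc
      exact hj' (hs (Fin.val_injective (hc.trans hji.symm)))
    rw [if_neg this]
  · simp

lemma aux_support {F : Type*} [Field F] [DecidableEq F] {n r : ℕ} (hn : 0 < n)
    (s : Fin r → Fin (n + 1)) (c : Fin r → F) :
    #{i : Fin n | (∑ j : Fin r, if (s j : ℕ) = (i : ℕ) then c j else 0) ≠ 0}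
      ≤ #{j : Fin r | (s j : ℕ) < n ∧ c j ≠ 0} := by
  classical
  refine Finset.card_le_card_of_surjOn
    (fun j => if h : (s j : ℕ) < n then (⟨s j, h⟩ : Fin n) else ⟨0, hn⟩) ?_
  intro i hi
  simp only [Finset.coe_filter, Finset.mem_univ, true_and, Set.mem_setOf_eq] at hi ⊢
  obtain ⟨j, _, hj⟩ := Finset.exists_ne_zero_of_sum_ne_zero hi
  by_cases h : (s j : ℕ) = (i : ℕ)
  · rw [if_pos h] at hj
    have hlt : (s j : ℕ) < n := h ▸ i.isLt
    exact ⟨j, ⟨⟨hlt, hj⟩, by simp only [Set.mem_setOf_eq]; rw [dif_pos hlt]; exact Fin.ext h⟩⟩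
  · rw [if_neg h] at hj; exact absurd rfl hj

/-- Let C be an [n,k] Reed–Solomon code over GF(q) with parity check
matrix H (r = n − k rows), and suppose the covering radius of C is r = n − k.
Then a received word u is a deep hole of C (at distance n−k from C) if and only if
the augmented matrix [H | Hu] generates an [n+1, n−k] MDS code (every (n−k)×(n−k)
minor is nonzero). -/
theorem stmt_5 {F : Type*} [Field F] [Fintype F] [DecidableEq F]
    (n k r : ℕ) (hn : n = k + r) (hk : 2 ≤ k) (hr : 2 ≤ r) (hnq : n ≤ Fintype.card F)
    (x : Fin n → F) (hx : Function.Injective x)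
    (H : Matrix (Fin r) (Fin n) F)
    (hH : ∀ v : Fin n → F,
      (∃ f : Polynomial F, f.degree < (k : ℕ) ∧ v = fun i => f.eval (x i)) ↔ H.mulVec v = 0)
    -- the covering radius of C equals r = n − k :
    (hcov1 : ∀ w : Fin n → F, ∃ f : Polynomial F, f.degree < (k : ℕ) ∧
        hammingDist w (fun i => f.eval (x i)) ≤ r)
    (hcov2 : ∃ w : Fin n → F, ∀ f : Polynomial F, f.degree < (k : ℕ) →
        r ≤ hammingDist w (fun i => f.eval (x i)))
    (u : Fin n → F) :
    let A : Matrix (Fin r) (Fin (n + 1)) F :=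
      Matrix.of fun i j => if h : (j : ℕ) < n then H i ⟨j, h⟩ else H.mulVec u i
    -- u is a deep hole ↔ [H | Hu] is MDS
    ((∀ f : Polynomial F, f.degree < (k : ℕ) →
        r ≤ hammingDist u (fun i => f.eval (x i))) ↔
      (∀ s : Fin r → Fin (n + 1), Function.Injective s →
        (A.submatrix id s).det ≠ 0)) := by
  intro A
  have hA : A = (Matrix.of fun (i : Fin r) (j : Fin (n + 1)) =>
      if h : (j : ℕ) < n then H i ⟨j, h⟩ else H.mulVec u i) := rfl
  have hn0 : 0 < n := by omega
  constructor
  · -- deep hole → MDS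
    intro hdeep s hs hdet
    rw [hA] at hdet
    obtain ⟨c, hc0, hcv⟩ := Matrix.exists_mulVec_eq_zero_iff.mpr hdet
    set e : Fin n → F := fun i => ∑ j : Fin r, if (s j : ℕ) = (i : ℕ) then c j else 0
      with he_def
    have key : ∀ i0, H.mulVec e i0
        + ∑ j : Fin r, (if (s j : ℕ) < n then 0 else H.mulVec u i0 * c j) = 0 := by
      intro i0
      rw [he_def, ← aux_key H u s c i0]
      exact congrFun hcv i0
    -- shared contradiction: if H.mulVec e = 0 and some j with s j < n has c j ≠ 0
    have main : ∀ (_ : H.mulVec e = 0) (j : Fin r) (hjlt : (s j : ℕ) < n), c j = 0 := by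
      intro hker j hjlt
      by_contra hcj
      have hw : #{i : Fin n | e i ≠ 0} ≤ r := by
        calc #{i : Fin n | e i ≠ 0}
            ≤ #{j : Fin r | (s j : ℕ) < n ∧ c j ≠ 0} := by
              simp only [he_def]; exact aux_support hn0 s c
          _ ≤ r := le_trans (Finset.card_filter_le _ _) (by simp)
      have hez := aux_ker hn hx hH e hker hw
      have : e ⟨s j, hjlt⟩ = c j := by rw [he_def]; exact aux_single hs c rfl
      rw [hez] at this
      exact hcj (this.symm.trans rfl)
    by_cases hex : ∃ j0, ¬ ((s j0 : ℕ) < n)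
    · obtain ⟨j0, hj0⟩ := hex
      have hj0n : (s j0 : ℕ) = n := by have := (s j0).isLt; omega
      have huniq : ∀ j, ¬ ((s j : ℕ) < n) → j = j0 := by
        intro j hj
        have : (s j : ℕ) = n := by have := (s j).isLt; omega
        exact hs (Fin.val_injective (this.trans hj0n.symm))
      have key2 : ∀ i0, H.mulVec e i0 + H.mulVec u i0 * c j0 = 0 := by
        intro i0
        have := key i0
        rwa [Finset.sum_eq_single j0 (fun j _ hj => by
          by_cases h : (s j : ℕ) < n
          · rw [if_pos h]
          · exact absurd (huniq j h) hj) (by simp), if_neg hj0] at this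
      by_cases hcj0 : c j0 = 0
      · have hker : H.mulVec e = 0 := by
          funext i0
          have := key2 i0
          rw [hcj0, mul_zero, add_zero] at this
          exact this
        obtain ⟨j, hcj⟩ := Function.ne_iff.mp hc0
        have hjlt : (s j : ℕ) < n := by
          by_contra h
          exact hcj (huniq j h ▸ hcj0)
        exact hcj (main hker j hjlt)
      · -- c j0 ≠ 0 : u is within distance r-1 of a codeword
        set w : Fin n → F := fun i => u i + (c j0)⁻¹ * e i with hw_def
        have hwker : H.mulVec w = 0 := by
          have : w = u + (c j0)⁻¹ • e := by funext i; simp [hw_def]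
          rw [this, Matrix.mulVec_add, Matrix.mulVec_smul]
          funext i0
          have h2 := key2 i0
          have : H.mulVec e i0 = -(H.mulVec u i0 * c j0) := eq_neg_of_add_eq_zero_left h2
          simp only [Pi.add_apply, Pi.smul_apply, smul_eq_mul, this]
          field_simp
          simp
        obtain ⟨f, hdeg, hwf⟩ := (hH w).mpr hwker
        have hge := hdeep f hdeg
        rw [← hwf] at hge
        have hle : hammingDist u w ≤ #{i : Fin n | e i ≠ 0} := by
          apply Finset.card_le_card
          intro i hi
          simp only [Finset.mem_filter, Finset.mem_univ, true_and] at hi ⊢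
          intro hei
          exact hi (by simp [hw_def, hei])
        have hsupp : #{i : Fin n | e i ≠ 0} ≤ r - 1 := by
          calc #{i : Fin n | e i ≠ 0}
              ≤ #{j : Fin r | (s j : ℕ) < n ∧ c j ≠ 0} := by
                simp only [he_def]; exact aux_support hn0 s c
            _ ≤ #(Finset.univ.erase j0) := by
                apply Finset.card_le_card
                intro j hj
                simp only [Finset.mem_filter, Finset.mem_univ, true_and] at hj
                exact Finset.mem_erase.mpr ⟨fun hc => hj0 (hc ▸ hj.1), Finset.mem_univ _⟩
            _ = r - 1 := by simp [Finset.card_erase_of_mem]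
        omega
    · push_neg at hex
      have hker : H.mulVec e = 0 := by
        funext i0
        have := key i0
        rwa [Finset.sum_eq_zero (fun j _ => if_pos (hex j)), add_zero] at this
      obtain ⟨j, hcj⟩ := Function.ne_iff.mp hc0
      exact hcj (main hker j (hex j))
  · -- MDS → deep hole
    intro hMDS f hdeg
    by_contra hlt
    push_neg at hlt
    set e : Fin n → F := fun i => u i - f.eval (x i) with he_def
    have hce : H.mulVec (fun i => f.eval (x i)) = 0 := (hH _).mp ⟨f, hdeg, rfl⟩
    have hHe : H.mulVec e = H.mulVec u := by
      have : e = u - fun i => f.eval (x i) := rfl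
      rw [this, Matrix.mulVec_sub, hce, sub_zero]
    have hScard : #{i : Fin n | e i ≠ 0} ≤ r - 1 := by
      have heq : #{i : Fin n | e i ≠ 0} = hammingDist u (fun i => f.eval (x i)) := by
        unfold hammingDist
        congr 1
        ext i
        simp [he_def, sub_ne_zero]
      omega
    obtain ⟨S', hSS', -, hS'card⟩ := Finset.exists_subsuperset_card_eq
      (Finset.subset_univ {i : Fin n | e i ≠ 0}) hScard
      (by simp only [Finset.card_univ, Fintype.card_fin]; omega)
    set S'' : Finset (Fin (n + 1)) := insert (Fin.last n) (S'.image Fin.castSucc) with hS''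
    have hlast_not : Fin.last n ∉ S'.image Fin.castSucc := by
      intro hmem
      obtain ⟨i, -, hci⟩ := Finset.mem_image.mp hmem
      have := congrArg Fin.val hci
      simp only [Fin.coe_castSucc, Fin.val_last] at this
      omega
    have hS''card : S''.card = r := by
      rw [hS'', Finset.card_insert_of_notMem hlast_not,
        Finset.card_image_of_injective _ (Fin.castSucc_injective n), hS'card]
      omega
    set s : Fin r → Fin (n + 1) := fun j => (S''.orderIsoOfFin hS''card j : Fin (n + 1))
      with hs_def
    have hs : Function.Injective s := fun a b hab =>
      (S''.orderIsoOfFin hS''card).injective (Subtype.ext hab)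
    have hsmem : ∀ j, s j ∈ S'' := fun j => (S''.orderIsoOfFin hS''card j).2
    have hssurj : ∀ a ∈ S'', ∃ j, s j = a := by
      intro a ha
      obtain ⟨j, hj⟩ := (S''.orderIsoOfFin hS''card).surjective ⟨a, ha⟩
      exact ⟨j, congrArg Subtype.val hj⟩
    classical
    set c : Fin r → F := fun j => if h : (s j : ℕ) < n then -(e ⟨s j, h⟩) else 1 with hc_def
    obtain ⟨j1, hj1⟩ := hssurj (Fin.last n) (Finset.mem_insert_self _ _)
    have hj1n : ¬ ((s j1 : ℕ) < n) := by rw [hj1]; simp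
    have hcj1 : c j1 = 1 := by rw [hc_def]; exact dif_neg hj1n
    have hc0 : c ≠ 0 := by
      intro hc
      have := congrFun hc j1
      rw [hcj1] at this
      exact one_ne_zero this
    have huniq : ∀ j, ¬ ((s j : ℕ) < n) → j = j1 := by
      intro j hj
      have h1 : (s j : ℕ) = n := by have := (s j).isLt; omega
      have h2 : (s j1 : ℕ) = n := by rw [hj1]; simp
      exact hs (Fin.val_injective (h1.trans h2.symm))
    have he' : (fun i : Fin n => ∑ j : Fin r, if (s j : ℕ) = (i : ℕ) then c j else 0)
        = fun i => -(e i) := by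
      funext i
      by_cases hi : i ∈ S'
      · have hmem : Fin.castSucc i ∈ S'' :=
          Finset.mem_insert_of_mem (Finset.mem_image_of_mem _ hi)
        obtain ⟨j, hj⟩ := hssurj _ hmem
        have hji : (s j : ℕ) = (i : ℕ) := by rw [hj]; simp
        rw [aux_single hs c hji]
        have hlt : (s j : ℕ) < n := by rw [hji]; exact i.isLt
        rw [hc_def]
        simp only [dif_pos hlt]
        have hfe : (⟨(s j : ℕ), hlt⟩ : Fin n) = i := Fin.ext hji
        rw [hfe]
      · have hei : e i = 0 := by
          by_contra h
          exact hi (hSS' (Finset.mem_filter.mpr ⟨Finset.mem_univ _, h⟩))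
        rw [hei, neg_zero]
        apply Finset.sum_eq_zero
        intro j _
        have hne : (s j : ℕ) ≠ (i : ℕ) := by
          intro hc
          rcases Finset.mem_insert.mp (hsmem j) with h1 | h2
          · rw [h1] at hc
            simp only [Fin.val_last] at hc
            have := i.isLt; omega
          · obtain ⟨i', hi', hci⟩ := Finset.mem_image.mp h2
            have : i' = i := by
              apply Fin.ext
              have := congrArg Fin.val hci
              simp only [Fin.coe_castSucc] at this
              omega
            exact hi (this ▸ hi')
        rw [if_neg hne]
    have hcv : ((Matrix.of fun i j => if h : (j : ℕ) < n then H i ⟨j, h⟩ else H.mulVec u i :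
        Matrix (Fin r) (Fin (n + 1)) F).submatrix id s).mulVec c = 0 := by
      funext i0
      rw [aux_key H u s c i0, he']
      have htail : (∑ j : Fin r, if (s j : ℕ) < n then 0 else H.mulVec u i0 * c j)
          = H.mulVec u i0 := by
        rw [Finset.sum_eq_single j1 (fun j _ hj => by
          by_cases h : (s j : ℕ) < n
          · rw [if_pos h]
          · exact absurd (huniq j h) hj) (by simp)]
        rw [if_neg hj1n, hcj1, mul_one]
      rw [htail]
      have hneg : (fun i : Fin n => -(e i)) = -e := rfl
      rw [hneg, Matrix.mulVec_neg, hHe]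
      simp
    apply hMDS s hs
    rw [hA]
    exact Matrix.exists_mulVec_eq_zero_iff.mp ⟨c, hc0, hcv⟩
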